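/- arXiv:0708.0397 — 5 statements merged into one kernel-verified Lean document; each statement's English description precedes it below -/
import Mathlib

section
/- Let G be a group with elements a2, a4, b, u3 such that b commutes with a2, (u3*b)² = 1, u3*a2*u3⁻¹ = a2*a4⁻¹*a2⁻¹, and a2*a4*a2 = a4*a2*a4. Then b*a4*b⁻¹ = u3⁻¹*a4⁻¹*u3. -/
theorem stmt12 {G : Type*} [Group G] (a2 a4 b u3 : G)
    (hb2 : b * a2 = a2 * b) (h11 : (u3 * b) ^ 2 = 1)
    (h9 : u3 * a2 * u3⁻¹ = a2 * a4⁻¹ * a2⁻¹)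
    (h24 : a2 * a4 * a2 = a4 * a2 * a4) :
    b * a4 * b⁻¹ = u3⁻¹ * a4⁻¹ * u3 := by
  have h1 : u3 * b * (u3 * b) = 1 := by rw [← sq]; exact h11
  have hbu : b * u3 = u3⁻¹ * b⁻¹ := by
    have h2 : b * (u3 * b) = u3⁻¹ := by
      apply eq_inv_of_mul_eq_one_right
      calc u3 * (b * (u3 * b)) = u3 * b * (u3 * b) := by group
        _ = 1 := h1
    calc b * u3 = (b * (u3 * b)) * b⁻¹ := by group
      _ = u3⁻¹ * b⁻¹ := by rw [h2]
  have h3 : b⁻¹ * u3⁻¹ = u3 * b := by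
    have h4 : (u3 * b)⁻¹ = u3 * b := inv_eq_of_mul_eq_one_right h1
    calc b⁻¹ * u3⁻¹ = (u3 * b)⁻¹ := by rw [mul_inv_rev]
      _ = u3 * b := h4
  have hb2' : b * a2⁻¹ = a2⁻¹ * b := by
    calc b * a2⁻¹ = a2⁻¹ * (a2 * b) * a2⁻¹ := by group
      _ = a2⁻¹ * (b * a2) * a2⁻¹ := by rw [hb2]
      _ = a2⁻¹ * b := by group
  have hb2i : b⁻¹ * a2 = a2 * b⁻¹ := by
    calc b⁻¹ * a2 = b⁻¹ * (a2 * b) * b⁻¹ := by group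
      _ = b⁻¹ * (b * a2) * b⁻¹ := by rw [hb2]
      _ = a2 * b⁻¹ := by group
  -- parametrized rewriting rules
  have cb : ∀ x : G, b * (a2 * x) = a2 * (b * x) := fun x => by
    rw [← mul_assoc, hb2, mul_assoc]
  have cb' : ∀ x : G, b * (a2⁻¹ * x) = a2⁻¹ * (b * x) := fun x => by
    rw [← mul_assoc, hb2', mul_assoc]
  have cbi : ∀ x : G, b⁻¹ * (a2 * x) = a2 * (b⁻¹ * x) := fun x => by
    rw [← mul_assoc, hb2i, mul_assoc]
  have hu : ∀ x : G, b * (u3 * x) = u3⁻¹ * (b⁻¹ * x) := fun x => by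
    rw [← mul_assoc, hbu, mul_assoc]
  have hu2 : ∀ x : G, b⁻¹ * (u3⁻¹ * x) = u3 * (b * x) := fun x => by
    rw [← mul_assoc, h3, mul_assoc]
  have h9l : u3 * a2 = a2 * a4⁻¹ * a2⁻¹ * u3 := by
    calc u3 * a2 = (u3 * a2 * u3⁻¹) * u3 := by group
      _ = a2 * a4⁻¹ * a2⁻¹ * u3 := by rw [h9]
  have h9l' : u3 * a2⁻¹ = a2 * a4 * a2⁻¹ * u3 := by
    calc u3 * a2⁻¹ = a2 * a4⁻¹ * a2⁻¹ * (u3 * a2 * u3⁻¹)⁻¹ * u3 * a2⁻¹ * u3⁻¹ * u3 := by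
          rw [h9]; group
      _ = a2 * a4⁻¹ * a2⁻¹ * (a2 * a4⁻¹ * a2⁻¹)⁻¹ * u3 * a2⁻¹ * u3⁻¹ * u3 := by rw [h9]
      _ = u3 * a2⁻¹ * u3⁻¹ * u3 := by group
      _ = (u3 * a2 * u3⁻¹)⁻¹ * u3 := by group
      _ = (a2 * a4⁻¹ * a2⁻¹)⁻¹ * u3 := by rw [h9]
      _ = a2 * a4 * a2⁻¹ * u3 := by group
  have hu9 : ∀ x : G, u3 * (a2 * x) = a2 * (a4⁻¹ * (a2⁻¹ * (u3 * x))) := fun x => by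
    rw [← mul_assoc, h9l]; group
  have hu9' : ∀ x : G, u3 * (a2⁻¹ * x) = a2 * (a4 * (a2⁻¹ * (u3 * x))) := fun x => by
    rw [← mul_assoc, h9l']; group
  have hbr : ∀ x : G, a2 * (a4 * (a2 * x)) = a4 * (a2 * (a4 * x)) := fun x => by
    calc a2 * (a4 * (a2 * x)) = (a2 * a4 * a2) * x := by group
      _ = (a4 * a2 * a4) * x := by rw [h24]
      _ = a4 * (a2 * (a4 * x)) := by group
  have ha4i : a4⁻¹ = a2⁻¹ * (u3 * (a2 * (u3⁻¹ * a2))) := by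
    calc a4⁻¹ = a2⁻¹ * (a2 * a4⁻¹ * a2⁻¹) * a2 := by group
      _ = a2⁻¹ * (u3 * a2 * u3⁻¹) * a2 := by rw [h9]
      _ = a2⁻¹ * (u3 * (a2 * (u3⁻¹ * a2))) := by group
  -- key step 1: b * a4⁻¹ * b⁻¹ computed
  have key1 : b * a4⁻¹ * b⁻¹ = a2⁻¹ * (u3⁻¹ * (a2 * (u3 * a2))) := by
    rw [ha4i]
    simp only [mul_assoc]
    simp only [cb, cb', cbi, hu, hu2]
    simp only [mul_inv_cancel, inv_mul_cancel, mul_one, one_mul,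
      mul_inv_cancel_left, inv_mul_cancel_left]
  -- key step 2: conjugating by u3 gives a4
  have key2 : u3 * (b * a4⁻¹ * b⁻¹) * u3⁻¹ = a4 := by
    rw [key1]
    simp only [mul_assoc]
    simp only [hu9, hu9']
    simp only [mul_inv_cancel, inv_mul_cancel, mul_one, one_mul,
      mul_inv_cancel_left, inv_mul_cancel_left]
    simp only [hbr]
    simp only [mul_inv_cancel, inv_mul_cancel, mul_one, one_mul,
      mul_inv_cancel_left, inv_mul_cancel_left]
  have E : u3 * (b * a4 * b⁻¹) * u3⁻¹ = a4⁻¹ := by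
    have := congrArg (fun x => x⁻¹) key2
    simp only [mul_inv_rev, inv_inv] at this
    calc u3 * (b * a4 * b⁻¹) * u3⁻¹ = u3 * b * a4 * b⁻¹ * u3⁻¹ := by group
      _ = a4⁻¹ := by rw [← this]; group
  calc b * a4 * b⁻¹ = u3⁻¹ * (u3 * (b * a4 * b⁻¹) * u3⁻¹) * u3 := by group
    _ = u3⁻¹ * a4⁻¹ * u3 := by rw [E]
end

section
/- Let G be a group with elements a1, a2, a3, a4, b, u1, u2, u3, t satisfying relations (1)–(21) below. Then the braid relation u1*u2*u1 = u2*u1*u2 holds in G. -/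
theorem stmt14 {G : Type*} [Group G] (a1 a2 a3 a4 b u1 u2 u3 t : G)
    (h1 : a1 * a3 = a3 * a1) (h2 : a4 * a3 = a3 * a4)
    (h3a : b * a1 = a1 * b) (h3b : b * a2 = a2 * b) (h3c : b * a3 = a3 * b)
    (h4a : a1 * a2 * a1 = a2 * a1 * a2) (h4b : a3 * a2 * a3 = a2 * a3 * a2)
    (h4c : a4 * a2 * a4 = a2 * a4 * a2)
    (h5 : (a1 * a2 * a3) ^ 4 = 1) (h6 : (a4 * a2 * a3) ^ 4 = 1)
    (h7 : u3 * a1 * u3⁻¹ = a1) (h8 : u3 * a3 * u3⁻¹ = a3⁻¹)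
    (h9 : u3 * a2 * u3⁻¹ = a2 * a4⁻¹ * a2⁻¹)
    (h10 : (u3 * a4) ^ 2 = 1) (h11 : (u3 * b) ^ 2 = 1)
    (h12 : u3 * a4 * u3⁻¹ = u1 * a4 * u1⁻¹)
    (h13 : u1 * u3 = u3 * u1) (h14 : u1 ^ 2 = u3 ^ 2)
    (h15 : u1 = (a1 * a2 * a3) ^ 2 * u3 * (a1 * a2 * a3) ^ 2)
    (h16 : u2 = a3⁻¹ * a2⁻¹ * u3⁻¹ * a2 * a3)
    (h17 : t = u3 * u2 * u1 * a1 * a2 * a3)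
    (h18 : t ^ 2 = 1) (h19 : t * u3 * t = u3⁻¹) (h20 : t * b * t = b⁻¹)
    (h21a : t * a1 = a1 * t) (h21b : t * a2 = a2 * t) (h21c : t * a3 = a3 * t) :
    u1 * u2 * u1 = u2 * u1 * u2 := by
  have htt : t * t = 1 := by rw [← sq]; exact h18
  -- t * u3 = u3⁻¹ * t and t * u3⁻¹ = u3 * t
  have htu : t * u3 = u3⁻¹ * t := by
    rw [← h19]; simp [mul_assoc, htt]
  have htuinv : t * u3⁻¹ = u3 * t := by
    apply mul_right_cancel (b := u3)
    simp [mul_assoc, htu]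
  have rtu : ∀ x : G, t * (u3⁻¹ * x) = u3 * (t * x) := fun x => by
    rw [← mul_assoc, htuinv, mul_assoc]
  -- t commutes with a1, a2, a3 and their inverses
  have r1 : ∀ x : G, t * (a1 * x) = a1 * (t * x) := fun x => by
    rw [← mul_assoc, h21a, mul_assoc]
  have r2 : ∀ x : G, t * (a2 * x) = a2 * (t * x) := fun x => by
    rw [← mul_assoc, h21b, mul_assoc]
  have r3 : ∀ x : G, t * (a3 * x) = a3 * (t * x) := fun x => by
    rw [← mul_assoc, h21c, mul_assoc]
  have h21ai : t * a1⁻¹ = a1⁻¹ * t := by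
    apply mul_right_cancel (b := a1); simp [mul_assoc, h21a]
  have h21bi : t * a2⁻¹ = a2⁻¹ * t := by
    apply mul_right_cancel (b := a2); simp [mul_assoc, h21b]
  have h21ci : t * a3⁻¹ = a3⁻¹ * t := by
    apply mul_right_cancel (b := a3); simp [mul_assoc, h21c]
  have r1i : ∀ x : G, t * (a1⁻¹ * x) = a1⁻¹ * (t * x) := fun x => by
    rw [← mul_assoc, h21ai, mul_assoc]
  have r2i : ∀ x : G, t * (a2⁻¹ * x) = a2⁻¹ * (t * x) := fun x => by
    rw [← mul_assoc, h21bi, mul_assoc]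
  have r3i : ∀ x : G, t * (a3⁻¹ * x) = a3⁻¹ * (t * x) := fun x => by
    rw [← mul_assoc, h21ci, mul_assoc]
  -- u3 commutes with a1
  have cu3a1 : u3 * a1 = a1 * u3 := by
    conv_rhs => rw [← h7]
    group
  have ra1 : a1⁻¹ * u3 = u3 * a1⁻¹ := by
    apply mul_right_cancel (b := a1); simp [mul_assoc, cu3a1]
  have ra1x : ∀ x : G, a1⁻¹ * (u3 * x) = u3 * (a1⁻¹ * x) := fun x => by
    rw [← mul_assoc, ra1, mul_assoc]
  -- conjugating u3 by (a1*a2*a3)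
  have key3 : (a1*a2*a3)⁻¹ * u3 * (a1*a2*a3) = a3⁻¹ * a2⁻¹ * u3 * a2 * a3 := by
    simp only [mul_inv_rev, mul_assoc, ra1x, inv_mul_cancel_left]
  -- c^2 is an involution
  have hsq : ((a1*a2*a3)^2)⁻¹ = (a1*a2*a3)^2 := by
    apply inv_eq_of_mul_eq_one_right
    rw [← pow_add]
    exact h5
  have hcu : (a1*a2*a3)⁻¹ * ((a1*a2*a3)⁻¹ * u3 * (a1*a2*a3)) * (a1*a2*a3)
      = (a1*a2*a3)^2 * u3 * (a1*a2*a3)^2 := by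
    calc (a1*a2*a3)⁻¹ * ((a1*a2*a3)⁻¹ * u3 * (a1*a2*a3)) * (a1*a2*a3)
        = ((a1*a2*a3)^2)⁻¹ * u3 * (a1*a2*a3)^2 := by
          simp only [sq, mul_inv_rev, mul_assoc]
      _ = (a1*a2*a3)^2 * u3 * (a1*a2*a3)^2 := by rw [hsq]
  -- key identity: u1 * t = t * c⁻¹ * u2 * c
  have key : u1 * t = t * (a1*a2*a3)⁻¹ * u2 * (a1*a2*a3) := by
    rw [h15, h16, ← hcu, key3]
    simp only [mul_assoc, mul_inv_rev, r1, r2, r3, r1i, r2i, r3i, rtu,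
      h21a, h21b, h21c, h21ai, h21bi, h21ci, htuinv]
  -- from h17
  have E1 : u2 * u1 = u3⁻¹ * t * (a1*a2*a3)⁻¹ := by
    rw [h17]; group
  have cu13 : u1 * u3⁻¹ = u3⁻¹ * u1 := by
    apply mul_right_cancel (b := u3); simp [mul_assoc, h13]
  calc u1 * u2 * u1 = u1 * (u2 * u1) := by rw [mul_assoc]
    _ = u1 * (u3⁻¹ * t * (a1*a2*a3)⁻¹) := by rw [E1]
    _ = u3⁻¹ * (u1 * t) * (a1*a2*a3)⁻¹ := by
        rw [← mul_assoc, ← mul_assoc, cu13, mul_assoc u3⁻¹ u1 t]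
    _ = u3⁻¹ * (t * (a1*a2*a3)⁻¹ * u2 * (a1*a2*a3)) * (a1*a2*a3)⁻¹ := by rw [key]
    _ = u3⁻¹ * t * (a1*a2*a3)⁻¹ * u2 := by group
    _ = u2 * u1 * u2 := by rw [← E1]
end

section
/- Let G be a group with elements a1, a2, a3, a4, b, u1, u2, u3, t satisfying relations (1)–(21) below. Then a2⁻¹*u1*u2*u1*a2 = a3*(u1*u3⁻¹)*t. -/
set_option maxHeartbeats 1000000 in
theorem stmt15 {G : Type*} [Group G] (a1 a2 a3 a4 b u1 u2 u3 t : G)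
    (h1 : a1 * a3 = a3 * a1) (h2 : a4 * a3 = a3 * a4)
    (h3a : b * a1 = a1 * b) (h3b : b * a2 = a2 * b) (h3c : b * a3 = a3 * b)
    (h4a : a1 * a2 * a1 = a2 * a1 * a2) (h4b : a3 * a2 * a3 = a2 * a3 * a2)
    (h4c : a4 * a2 * a4 = a2 * a4 * a2)
    (h5 : (a1 * a2 * a3) ^ 4 = 1) (h6 : (a4 * a2 * a3) ^ 4 = 1)
    (h7 : u3 * a1 * u3⁻¹ = a1) (h8 : u3 * a3 * u3⁻¹ = a3⁻¹)
    (h9 : u3 * a2 * u3⁻¹ = a2 * a4⁻¹ * a2⁻¹)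
    (h10 : (u3 * a4) ^ 2 = 1) (h11 : (u3 * b) ^ 2 = 1)
    (h12 : u3 * a4 * u3⁻¹ = u1 * a4 * u1⁻¹)
    (h13 : u1 * u3 = u3 * u1) (h14 : u1 ^ 2 = u3 ^ 2)
    (h15 : u1 = (a1 * a2 * a3) ^ 2 * u3 * (a1 * a2 * a3) ^ 2)
    (h16 : u2 = a3⁻¹ * a2⁻¹ * u3⁻¹ * a2 * a3)
    (h17 : t = u3 * u2 * u1 * a1 * a2 * a3)
    (h18 : t ^ 2 = 1) (h19 : t * u3 * t = u3⁻¹) (h20 : t * b * t = b⁻¹)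
    (h21a : t * a1 = a1 * t) (h21b : t * a2 = a2 * t) (h21c : t * a3 = a3 * t) :
    a2⁻¹ * u1 * u2 * u1 * a2 = a3 * (u1 * u3⁻¹) * t := by
  -- helpers: from x*a = b*x derive pushes for inverses
  have conj_inv : ∀ x a c : G, x * a = c * x → x * a⁻¹ = c⁻¹ * x := by
    intro x a c h
    have hb : c = x * a * x⁻¹ := by rw [h]; group
    rw [hb]; group
  have conj_linv : ∀ x a c : G, x * a = c * x → x⁻¹ * c = a * x⁻¹ := by
    intro x a c h
    have hb : c = x * a * x⁻¹ := by rw [h]; group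
    rw [hb]; group
  -- basic u3 pushes
  have P7 : u3 * a1 = a1 * u3 := by
    calc u3 * a1 = u3 * a1 * u3⁻¹ * u3 := by group
    _ = a1 * u3 := by rw [h7]
  have P8 : u3 * a3 = a3⁻¹ * u3 := by
    calc u3 * a3 = u3 * a3 * u3⁻¹ * u3 := by group
    _ = a3⁻¹ * u3 := by rw [h8]
  have P9 : u3 * a2 = a2 * a4⁻¹ * a2⁻¹ * u3 := by
    calc u3 * a2 = u3 * a2 * u3⁻¹ * u3 := by group
    _ = a2 * a4⁻¹ * a2⁻¹ * u3 := by rw [h9]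
  have P8i : u3 * a3⁻¹ = a3 * u3 := by
    have h := conj_inv u3 a3 a3⁻¹ P8
    calc u3 * a3⁻¹ = a3⁻¹⁻¹ * u3 := h
    _ = a3 * u3 := by group
  have P8l : u3⁻¹ * a3 = a3⁻¹ * u3⁻¹ := conj_linv u3 a3⁻¹ a3 P8i
  have P8l2 : u3⁻¹ * a3⁻¹ = a3 * u3⁻¹ := conj_linv u3 a3 a3⁻¹ P8
  have P9l : u3⁻¹ * (a2 * a4⁻¹ * a2⁻¹) = a2 * u3⁻¹ := conj_linv u3 a2 (a2 * a4⁻¹ * a2⁻¹) P9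
  -- braid lemmas about c = a1*a2*a3
  have B1 : (a1 * a2 * a3) * a1 = a2 * (a1 * a2 * a3) := by
    calc (a1 * a2 * a3) * a1 = (a1 * a2) * (a3 * a1) := by group
    _ = (a1 * a2) * (a1 * a3) := by rw [← h1]
    _ = (a1 * a2 * a1) * a3 := by group
    _ = (a2 * a1 * a2) * a3 := by rw [h4a]
    _ = a2 * (a1 * a2 * a3) := by group
  have B2 : (a1 * a2 * a3) * a2 = a3 * (a1 * a2 * a3) := by
    calc (a1 * a2 * a3) * a2 = a1 * (a2 * a3 * a2) := by group
    _ = a1 * (a3 * a2 * a3) := by rw [← h4b]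
    _ = (a1 * a3) * (a2 * a3) := by group
    _ = (a3 * a1) * (a2 * a3) := by rw [h1]
    _ = a3 * (a1 * a2 * a3) := by group
  have zc : (a3⁻¹ * a2⁻¹ * a1 * a2 * a3) * (a1 * a2 * a3) = (a1 * a2 * a3) * a3 := by
    calc (a3⁻¹ * a2⁻¹ * a1 * a2 * a3) * (a1 * a2 * a3)
        = (a3⁻¹ * a2⁻¹) * ((a1 * a2) * ((a3 * a1) * (a2 * a3))) := by group
    _ = (a3⁻¹ * a2⁻¹) * ((a1 * a2) * ((a1 * a3) * (a2 * a3))) := by rw [← h1]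
    _ = a3⁻¹ * (a2⁻¹ * ((a1 * a2 * a1) * (a3 * a2 * a3))) := by group
    _ = a3⁻¹ * (a2⁻¹ * ((a2 * a1 * a2) * (a3 * a2 * a3))) := by rw [h4a]
    _ = a3⁻¹ * (a1 * ((a2 * a3 * a2) * a3)) := by group
    _ = a3⁻¹ * (a1 * ((a3 * a2 * a3) * a3)) := by rw [h4b]
    _ = (a3⁻¹ * (a1 * a3)) * (a2 * a3 * a3) := by group
    _ = (a3⁻¹ * (a3 * a1)) * (a2 * a3 * a3) := by rw [h1]
    _ = (a1 * a2 * a3) * a3 := by group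
  have B3 : (a1 * a2 * a3) * a3 = (a3⁻¹ * a2⁻¹ * a1 * a2 * a3) * (a1 * a2 * a3) := zc.symm
  -- W = (a1*a2*a3)^2 facts
  set W := (a1 * a2 * a3) * (a1 * a2 * a3) with hW
  have Bw1 : W * a1 = a3 * W := by
    calc W * a1 = (a1 * a2 * a3) * ((a1 * a2 * a3) * a1) := by rw [hW]; group
    _ = (a1 * a2 * a3) * (a2 * (a1 * a2 * a3)) := by rw [B1]
    _ = ((a1 * a2 * a3) * a2) * (a1 * a2 * a3) := by group
    _ = (a3 * (a1 * a2 * a3)) * (a1 * a2 * a3) := by rw [B2]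
    _ = a3 * W := by rw [hW]; group
  have hw1 : W * W = 1 := by
    have h := h5
    rw [pow_succ, pow_succ, pow_succ, pow_one] at h
    calc W * W = a1 * a2 * a3 * (a1 * a2 * a3) * (a1 * a2 * a3) * (a1 * a2 * a3) := by
          rw [hW]; group
    _ = 1 := h
  have Bw3 : W * a3 = a1 * W := by
    calc W * a3 = (W * a3) * (W * W) := by rw [hw1, mul_one]
    _ = W * ((a3 * W) * W) := by group
    _ = W * ((W * a1) * W) := by rw [← Bw1]
    _ = (W * W) * (a1 * W) := by group
    _ = 1 * (a1 * W) := by rw [hw1]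
    _ = a1 * W := by group
  have hwinv : W⁻¹ = W := by
    calc W⁻¹ = W⁻¹ * (W * W) := by rw [hw1, mul_one]
    _ = W := by group
  have hu1w : u1 = W * u3 * W := by rw [h15, hW, pow_two]
  have hu1inv : u1⁻¹ = W * u3⁻¹ * W := by
    calc u1⁻¹ = (W * u3 * W)⁻¹ := by rw [hu1w]
    _ = W⁻¹ * u3⁻¹ * W⁻¹ := by group
    _ = W * u3⁻¹ * W := by rw [hwinv]
  have Pu1a3 : u1 * a3 = a3 * u1 := by
    calc u1 * a3 = (W * u3 * W) * a3 := by rw [hu1w]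
    _ = (W * u3) * (W * a3) := by group
    _ = (W * u3) * (a1 * W) := by rw [Bw3]
    _ = W * ((u3 * a1) * W) := by group
    _ = W * ((a1 * u3) * W) := by rw [P7]
    _ = (W * a1) * (u3 * W) := by group
    _ = (a3 * W) * (u3 * W) := by rw [Bw1]
    _ = a3 * (W * u3 * W) := by group
    _ = a3 * u1 := by rw [← hu1w]
  have Pu1a3i : u1 * a3⁻¹ = a3⁻¹ * u1 := conj_inv u1 a3 a3 Pu1a3
  -- t pushes
  have tt1 : t * t = 1 := by
    have h := h18
    rw [pow_two] at h
    exact h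
  have Pt1i : t * a1⁻¹ = a1⁻¹ * t := conj_inv t a1 a1 h21a
  have Pt2i : t * a2⁻¹ = a2⁻¹ * t := conj_inv t a2 a2 h21b
  have Pt3i : t * a3⁻¹ = a3⁻¹ * t := conj_inv t a3 a3 h21c
  have Ptc : t * (a1 * a2 * a3) = (a1 * a2 * a3) * t := by
    calc t * (a1 * a2 * a3) = (t * a1) * (a2 * a3) := by group
    _ = (a1 * t) * (a2 * a3) := by rw [h21a]
    _ = a1 * ((t * a2) * a3) := by group
    _ = a1 * ((a2 * t) * a3) := by rw [h21b]
    _ = (a1 * a2) * (t * a3) := by group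
    _ = (a1 * a2) * (a3 * t) := by rw [h21c]
    _ = (a1 * a2 * a3) * t := by group
  have Ptci : t * (a1 * a2 * a3)⁻¹ = (a1 * a2 * a3)⁻¹ * t :=
    conj_inv t (a1 * a2 * a3) (a1 * a2 * a3) Ptc
  have Ptw : t * W = W * t := by
    calc t * W = (t * (a1 * a2 * a3)) * (a1 * a2 * a3) := by rw [hW]; group
    _ = ((a1 * a2 * a3) * t) * (a1 * a2 * a3) := by rw [Ptc]
    _ = (a1 * a2 * a3) * (t * (a1 * a2 * a3)) := by group
    _ = (a1 * a2 * a3) * ((a1 * a2 * a3) * t) := by rw [Ptc]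
    _ = W * t := by rw [hW]; group
  have Ptu3 : t * u3 = u3⁻¹ * t := by
    calc t * u3 = t * u3 * (t * t) := by rw [tt1, mul_one]
    _ = (t * u3 * t) * t := by group
    _ = u3⁻¹ * t := by rw [h19]
  have Ptu3i : t * u3⁻¹ = u3 * t := by
    have h := conj_inv t u3 u3⁻¹ Ptu3
    calc t * u3⁻¹ = u3⁻¹⁻¹ * t := h
    _ = u3 * t := by group
  have hu2inv : u2⁻¹ = a3⁻¹ * a2⁻¹ * u3 * a2 * a3 := by rw [h16]; group
  have Ptu2 : t * u2 = u2⁻¹ * t := by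
    calc t * u2 = t * (a3⁻¹ * a2⁻¹ * u3⁻¹ * a2 * a3) := by rw [h16]
    _ = (t * a3⁻¹) * (a2⁻¹ * u3⁻¹ * a2 * a3) := by group
    _ = (a3⁻¹ * t) * (a2⁻¹ * u3⁻¹ * a2 * a3) := by rw [Pt3i]
    _ = a3⁻¹ * ((t * a2⁻¹) * (u3⁻¹ * a2 * a3)) := by group
    _ = a3⁻¹ * ((a2⁻¹ * t) * (u3⁻¹ * a2 * a3)) := by rw [Pt2i]
    _ = (a3⁻¹ * a2⁻¹) * ((t * u3⁻¹) * (a2 * a3)) := by group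
    _ = (a3⁻¹ * a2⁻¹) * ((u3 * t) * (a2 * a3)) := by rw [Ptu3i]
    _ = (a3⁻¹ * a2⁻¹ * u3) * ((t * a2) * a3) := by group
    _ = (a3⁻¹ * a2⁻¹ * u3) * ((a2 * t) * a3) := by rw [h21b]
    _ = (a3⁻¹ * a2⁻¹ * u3 * a2) * (t * a3) := by group
    _ = (a3⁻¹ * a2⁻¹ * u3 * a2) * (a3 * t) := by rw [h21c]
    _ = (a3⁻¹ * a2⁻¹ * u3 * a2 * a3) * t := by group
    _ = u2⁻¹ * t := by rw [← hu2inv]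
  have Ptu1 : t * u1 = u1⁻¹ * t := by
    calc t * u1 = t * (W * u3 * W) := by rw [hu1w]
    _ = (t * W) * (u3 * W) := by group
    _ = (W * t) * (u3 * W) := by rw [Ptw]
    _ = W * ((t * u3) * W) := by group
    _ = W * ((u3⁻¹ * t) * W) := by rw [Ptu3]
    _ = (W * u3⁻¹) * (t * W) := by group
    _ = (W * u3⁻¹) * (W * t) := by rw [Ptw]
    _ = (W * u3⁻¹ * W) * t := by group
    _ = u1⁻¹ * t := by rw [← hu1inv]
  have hA : u3 * u2 * u1 = t * (a1 * a2 * a3)⁻¹ := by rw [h17]; group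
  -- the relation u3*u2*u1 = u3⁻¹*u2⁻¹*u1⁻¹
  have es1 : (t * u3) * (u2 * (u1 * t)) = u3⁻¹ * u2⁻¹ * u1⁻¹ := by
    calc (t * u3) * (u2 * (u1 * t)) = (u3⁻¹ * t) * (u2 * (u1 * t)) := by rw [Ptu3]
    _ = u3⁻¹ * ((t * u2) * (u1 * t)) := by group
    _ = u3⁻¹ * ((u2⁻¹ * t) * (u1 * t)) := by rw [Ptu2]
    _ = (u3⁻¹ * u2⁻¹) * ((t * u1) * t) := by group
    _ = (u3⁻¹ * u2⁻¹) * ((u1⁻¹ * t) * t) := by rw [Ptu1]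
    _ = (u3⁻¹ * u2⁻¹) * (u1⁻¹ * (t * t)) := by group
    _ = (u3⁻¹ * u2⁻¹) * (u1⁻¹ * 1) := by rw [tt1]
    _ = u3⁻¹ * u2⁻¹ * u1⁻¹ := by group
  have es2 : (t * u3) * (u2 * (u1 * t)) = u3 * u2 * u1 := by
    calc (t * u3) * (u2 * (u1 * t)) = t * ((u3 * u2 * u1) * t) := by group
    _ = t * ((t * (a1 * a2 * a3)⁻¹) * t) := by rw [hA]
    _ = (t * t) * ((a1 * a2 * a3)⁻¹ * t) := by group
    _ = 1 * ((a1 * a2 * a3)⁻¹ * t) := by rw [tt1]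
    _ = (a1 * a2 * a3)⁻¹ * t := by group
    _ = t * (a1 * a2 * a3)⁻¹ := by rw [Ptci]
    _ = u3 * u2 * u1 := by rw [← hA]
  have star : u3 * u2 * u1 = u3⁻¹ * u2⁻¹ * u1⁻¹ := by rw [← es2]; exact es1
  have h14' : u1 * u1 = u3 * u3 := by
    have h := h14
    rw [pow_two, pow_two] at h
    exact h
  have I3 : u2⁻¹ = (u3 * u3) * u2 * (u3 * u3) := by
    calc u2⁻¹ = u3 * ((u3⁻¹ * u2⁻¹ * u1⁻¹) * u1) := by group
    _ = u3 * ((u3 * u2 * u1) * u1) := by rw [← star]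
    _ = (u3 * u3) * u2 * (u1 * u1) := by group
    _ = (u3 * u3) * u2 * (u3 * u3) := by rw [h14']
  have Pu3sq3 : (u3 * u3) * a3 = a3 * (u3 * u3) := by
    calc (u3 * u3) * a3 = u3 * (u3 * a3) := by group
    _ = u3 * (a3⁻¹ * u3) := by rw [P8]
    _ = (u3 * a3⁻¹) * u3 := by group
    _ = (a3 * u3) * u3 := by rw [P8i]
    _ = a3 * (u3 * u3) := by group
  -- I1 : u2 * a3 = (u3⁻¹*a2*u3) * u2   (from t*a2 = a2*t)
  have ht2 := h21b
  rw [h17] at ht2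
  have e1a : (u3 * u2 * u1) * ((a1 * a2 * a3) * a2) = a2 * ((u3 * u2 * u1) * (a1 * a2 * a3)) := by
    calc (u3 * u2 * u1) * ((a1 * a2 * a3) * a2) = u3 * u2 * u1 * a1 * a2 * a3 * a2 := by group
    _ = a2 * (u3 * u2 * u1 * a1 * a2 * a3) := ht2
    _ = a2 * ((u3 * u2 * u1) * (a1 * a2 * a3)) := by group
  have e1b : ((u3 * u2 * u1) * a3) * (a1 * a2 * a3) = (a2 * (u3 * u2 * u1)) * (a1 * a2 * a3) := by
    calc ((u3 * u2 * u1) * a3) * (a1 * a2 * a3) = (u3 * u2 * u1) * (a3 * (a1 * a2 * a3)) := by group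
    _ = (u3 * u2 * u1) * ((a1 * a2 * a3) * a2) := by rw [← B2]
    _ = a2 * ((u3 * u2 * u1) * (a1 * a2 * a3)) := e1a
    _ = (a2 * (u3 * u2 * u1)) * (a1 * a2 * a3) := by group
  have e1c : (u3 * u2 * u1) * a3 = a2 * (u3 * u2 * u1) := mul_right_cancel e1b
  have e1d : (u2 * a3) * u1 = ((u3⁻¹ * a2 * u3) * u2) * u1 := by
    calc (u2 * a3) * u1 = u2 * (a3 * u1) := by group
    _ = u2 * (u1 * a3) := by rw [← Pu1a3]
    _ = u3⁻¹ * ((u3 * u2 * u1) * a3) := by group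
    _ = u3⁻¹ * (a2 * (u3 * u2 * u1)) := by rw [e1c]
    _ = ((u3⁻¹ * a2 * u3) * u2) * u1 := by group
  have I1 : u2 * a3 = (u3⁻¹ * a2 * u3) * u2 := mul_right_cancel e1d
  -- I4 : u2⁻¹ * a3 = (a2*a4⁻¹*a2⁻¹) * u2⁻¹
  have I4 : u2⁻¹ * a3 = (a2 * a4⁻¹ * a2⁻¹) * u2⁻¹ := by
    calc u2⁻¹ * a3 = ((u3 * u3) * u2 * (u3 * u3)) * a3 := by rw [I3]
    _ = ((u3 * u3) * u2) * ((u3 * u3) * a3) := by group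
    _ = ((u3 * u3) * u2) * (a3 * (u3 * u3)) := by rw [Pu3sq3]
    _ = (u3 * u3) * ((u2 * a3) * (u3 * u3)) := by group
    _ = (u3 * u3) * (((u3⁻¹ * a2 * u3) * u2) * (u3 * u3)) := by rw [I1]
    _ = (u3 * a2) * ((u3 * u2) * (u3 * u3)) := by group
    _ = ((a2 * a4⁻¹ * a2⁻¹) * u3) * ((u3 * u2) * (u3 * u3)) := by rw [P9]
    _ = (a2 * a4⁻¹ * a2⁻¹) * ((u3 * u3) * u2 * (u3 * u3)) := by group
    _ = (a2 * a4⁻¹ * a2⁻¹) * u2⁻¹ := by rw [← I3]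
  have I4i : u2⁻¹ * a3⁻¹ = (a2 * a4 * a2⁻¹) * u2⁻¹ := by
    have h := conj_inv u2⁻¹ a3 (a2 * a4⁻¹ * a2⁻¹) I4
    calc u2⁻¹ * a3⁻¹ = (a2 * a4⁻¹ * a2⁻¹)⁻¹ * u2⁻¹ := h
    _ = (a2 * a4 * a2⁻¹) * u2⁻¹ := by group
  -- I5 : (u2*u1) * z = a3⁻¹ * (u2*u1)  (from t*a3 = a3*t)
  have ht3 := h21c
  rw [h17] at ht3
  have e5a : (u3 * u2 * u1) * ((a1 * a2 * a3) * a3) = a3 * ((u3 * u2 * u1) * (a1 * a2 * a3)) := by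
    calc (u3 * u2 * u1) * ((a1 * a2 * a3) * a3) = u3 * u2 * u1 * a1 * a2 * a3 * a3 := by group
    _ = a3 * (u3 * u2 * u1 * a1 * a2 * a3) := ht3
    _ = a3 * ((u3 * u2 * u1) * (a1 * a2 * a3)) := by group
  have e5b : ((u3 * u2 * u1) * (a3⁻¹ * a2⁻¹ * a1 * a2 * a3)) * (a1 * a2 * a3) =
      (a3 * (u3 * u2 * u1)) * (a1 * a2 * a3) := by
    calc ((u3 * u2 * u1) * (a3⁻¹ * a2⁻¹ * a1 * a2 * a3)) * (a1 * a2 * a3)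
        = (u3 * u2 * u1) * ((a3⁻¹ * a2⁻¹ * a1 * a2 * a3) * (a1 * a2 * a3)) := by group
    _ = (u3 * u2 * u1) * ((a1 * a2 * a3) * a3) := by rw [zc]
    _ = a3 * ((u3 * u2 * u1) * (a1 * a2 * a3)) := e5a
    _ = (a3 * (u3 * u2 * u1)) * (a1 * a2 * a3) := by group
  have e5c : (u3 * u2 * u1) * (a3⁻¹ * a2⁻¹ * a1 * a2 * a3) = a3 * (u3 * u2 * u1) :=
    mul_right_cancel e5b
  have I5 : (u2 * u1) * (a3⁻¹ * a2⁻¹ * a1 * a2 * a3) = a3⁻¹ * (u2 * u1) := by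
    calc (u2 * u1) * (a3⁻¹ * a2⁻¹ * a1 * a2 * a3)
        = u3⁻¹ * ((u3 * u2 * u1) * (a3⁻¹ * a2⁻¹ * a1 * a2 * a3)) := by group
    _ = u3⁻¹ * (a3 * (u3 * u2 * u1)) := by rw [e5c]
    _ = (u3⁻¹ * a3) * (u3 * (u2 * u1)) := by group
    _ = (a3⁻¹ * u3⁻¹) * (u3 * (u2 * u1)) := by rw [P8l]
    _ = a3⁻¹ * (u2 * u1) := by group
  -- key fact : u1 * z * u1⁻¹ = a2*a4*a2⁻¹
  have I6 : u1 * (a3⁻¹ * a2⁻¹ * a1 * a2 * a3) = (a2 * a4 * a2⁻¹) * u1 := by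
    calc u1 * (a3⁻¹ * a2⁻¹ * a1 * a2 * a3)
        = u2⁻¹ * ((u2 * u1) * (a3⁻¹ * a2⁻¹ * a1 * a2 * a3)) := by group
    _ = u2⁻¹ * (a3⁻¹ * (u2 * u1)) := by rw [I5]
    _ = (u2⁻¹ * a3⁻¹) * (u2 * u1) := by group
    _ = ((a2 * a4 * a2⁻¹) * u2⁻¹) * (u2 * u1) := by rw [I4i]
    _ = (a2 * a4 * a2⁻¹) * u1 := by group
  have e6a : (u1 * a3⁻¹) * ((a2⁻¹ * a1 * a2) * a3) = (a2 * a4 * a2⁻¹) * u1 := by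
    calc (u1 * a3⁻¹) * ((a2⁻¹ * a1 * a2) * a3) = u1 * (a3⁻¹ * a2⁻¹ * a1 * a2 * a3) := by group
    _ = (a2 * a4 * a2⁻¹) * u1 := I6
  have e6b : (a3⁻¹ * u1) * ((a2⁻¹ * a1 * a2) * a3) = (a2 * a4 * a2⁻¹) * u1 := by
    rw [← Pu1a3i]; exact e6a
  have E6 : u1 * (a2⁻¹ * a1 * a2) = (a3 * a2 * a4 * a2⁻¹ * a3⁻¹) * u1 := by
    calc u1 * (a2⁻¹ * a1 * a2)
        = (a3 * ((a3⁻¹ * u1) * ((a2⁻¹ * a1 * a2) * a3))) * a3⁻¹ := by group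
    _ = (a3 * ((a2 * a4 * a2⁻¹) * u1)) * a3⁻¹ := by rw [e6b]
    _ = (a3 * (a2 * a4 * a2⁻¹)) * (u1 * a3⁻¹) := by group
    _ = (a3 * (a2 * a4 * a2⁻¹)) * (a3⁻¹ * u1) := by rw [Pu1a3i]
    _ = (a3 * a2 * a4 * a2⁻¹ * a3⁻¹) * u1 := by group
  have E6' : u1 * (a2⁻¹ * a1⁻¹ * a2) = (a3 * a2 * a4⁻¹ * a2⁻¹ * a3⁻¹) * u1 := by
    have h := conj_inv u1 (a2⁻¹ * a1 * a2) (a3 * a2 * a4 * a2⁻¹ * a3⁻¹) E6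
    calc u1 * (a2⁻¹ * a1⁻¹ * a2) = u1 * (a2⁻¹ * a1 * a2)⁻¹ := by group
    _ = (a3 * a2 * a4 * a2⁻¹ * a3⁻¹)⁻¹ * u1 := h
    _ = (a3 * a2 * a4⁻¹ * a2⁻¹ * a3⁻¹) * u1 := by group
  have E7 : u3⁻¹ * (a3 * a2 * a4⁻¹ * a2⁻¹ * a3⁻¹) = (a3⁻¹ * a2 * a3) * u3⁻¹ := by
    calc u3⁻¹ * (a3 * a2 * a4⁻¹ * a2⁻¹ * a3⁻¹)
        = (u3⁻¹ * a3) * ((a2 * a4⁻¹ * a2⁻¹) * a3⁻¹) := by group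
    _ = (a3⁻¹ * u3⁻¹) * ((a2 * a4⁻¹ * a2⁻¹) * a3⁻¹) := by rw [P8l]
    _ = a3⁻¹ * ((u3⁻¹ * (a2 * a4⁻¹ * a2⁻¹)) * a3⁻¹) := by group
    _ = a3⁻¹ * ((a2 * u3⁻¹) * a3⁻¹) := by rw [P9l]
    _ = (a3⁻¹ * a2) * (u3⁻¹ * a3⁻¹) := by group
    _ = (a3⁻¹ * a2) * (a3 * u3⁻¹) := by rw [P8l2]
    _ = (a3⁻¹ * a2 * a3) * u3⁻¹ := by group
  have E8 : (u3⁻¹ * u1) * (a2⁻¹ * a1⁻¹ * a2) = (a3⁻¹ * a2 * a3) * (u3⁻¹ * u1) := by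
    calc (u3⁻¹ * u1) * (a2⁻¹ * a1⁻¹ * a2) = u3⁻¹ * (u1 * (a2⁻¹ * a1⁻¹ * a2)) := by group
    _ = u3⁻¹ * ((a3 * a2 * a4⁻¹ * a2⁻¹ * a3⁻¹) * u1) := by rw [E6']
    _ = (u3⁻¹ * (a3 * a2 * a4⁻¹ * a2⁻¹ * a3⁻¹)) * u1 := by group
    _ = ((a3⁻¹ * a2 * a3) * u3⁻¹) * u1 := by rw [E7]
    _ = (a3⁻¹ * a2 * a3) * (u3⁻¹ * u1) := by group
  have Ps3 : (u3⁻¹ * u1) * a3⁻¹ = a3 * (u3⁻¹ * u1) := by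
    calc (u3⁻¹ * u1) * a3⁻¹ = u3⁻¹ * (u1 * a3⁻¹) := by group
    _ = u3⁻¹ * (a3⁻¹ * u1) := by rw [Pu1a3i]
    _ = (u3⁻¹ * a3⁻¹) * u1 := by group
    _ = (a3 * u3⁻¹) * u1 := by rw [P8l2]
    _ = a3 * (u3⁻¹ * u1) := by group
  have R : (u3⁻¹ * u1) * (a3⁻¹ * a2⁻¹ * a1⁻¹ * a2) = (a2 * a3) * (u3⁻¹ * u1) := by
    calc (u3⁻¹ * u1) * (a3⁻¹ * a2⁻¹ * a1⁻¹ * a2)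
        = ((u3⁻¹ * u1) * a3⁻¹) * (a2⁻¹ * a1⁻¹ * a2) := by group
    _ = (a3 * (u3⁻¹ * u1)) * (a2⁻¹ * a1⁻¹ * a2) := by rw [Ps3]
    _ = a3 * ((u3⁻¹ * u1) * (a2⁻¹ * a1⁻¹ * a2)) := by group
    _ = a3 * ((a3⁻¹ * a2 * a3) * (u3⁻¹ * u1)) := by rw [E8]
    _ = (a2 * a3) * (u3⁻¹ * u1) := by group
  have hs : u1 * u3⁻¹ = u3⁻¹ * u1 := conj_inv u1 u3 u3 h13
  have Ptx : t * (a3⁻¹ * a2⁻¹ * a1⁻¹ * a2) = (a3⁻¹ * a2⁻¹ * a1⁻¹ * a2) * t := by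
    calc t * (a3⁻¹ * a2⁻¹ * a1⁻¹ * a2) = (t * a3⁻¹) * (a2⁻¹ * a1⁻¹ * a2) := by group
    _ = (a3⁻¹ * t) * (a2⁻¹ * a1⁻¹ * a2) := by rw [Pt3i]
    _ = a3⁻¹ * ((t * a2⁻¹) * (a1⁻¹ * a2)) := by group
    _ = a3⁻¹ * ((a2⁻¹ * t) * (a1⁻¹ * a2)) := by rw [Pt2i]
    _ = (a3⁻¹ * a2⁻¹) * ((t * a1⁻¹) * a2) := by group
    _ = (a3⁻¹ * a2⁻¹) * ((a1⁻¹ * t) * a2) := by rw [Pt1i]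
    _ = (a3⁻¹ * a2⁻¹ * a1⁻¹) * (t * a2) := by group
    _ = (a3⁻¹ * a2⁻¹ * a1⁻¹) * (a2 * t) := by rw [h21b]
    _ = (a3⁻¹ * a2⁻¹ * a1⁻¹ * a2) * t := by group
  -- final assembly
  calc a2⁻¹ * u1 * u2 * u1 * a2
      = a2⁻¹ * ((u1 * u3⁻¹) * ((u3 * u2 * u1) * a2)) := by group
  _ = a2⁻¹ * ((u1 * u3⁻¹) * ((t * (a1 * a2 * a3)⁻¹) * a2)) := by rw [hA]
  _ = a2⁻¹ * ((u1 * u3⁻¹) * (t * (a3⁻¹ * a2⁻¹ * a1⁻¹ * a2))) := by group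
  _ = a2⁻¹ * ((u1 * u3⁻¹) * ((a3⁻¹ * a2⁻¹ * a1⁻¹ * a2) * t)) := by rw [Ptx]
  _ = a2⁻¹ * (((u3⁻¹ * u1) * (a3⁻¹ * a2⁻¹ * a1⁻¹ * a2)) * t) := by rw [hs]; group
  _ = a2⁻¹ * (((a2 * a3) * (u3⁻¹ * u1)) * t) := by rw [R]
  _ = a3 * ((u3⁻¹ * u1) * t) := by group
  _ = a3 * (u1 * u3⁻¹) * t := by rw [hs]; group
end

section
/- Let G be a group with elements a1, a2, a3, a4, b, u1, u2, u3, t satisfying relations (1)–(21) below. Then t*a1⁻¹*u1⁻¹ = a3⁻¹*(a3²*a2)²*a4; equivalently, (a3²*a2)² = a3*t*a1⁻¹*u1⁻¹*a4⁻¹. -/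
set_option maxHeartbeats 2000000 in
theorem stmt17 {G : Type*} [Group G] (a1 a2 a3 a4 b u1 u2 u3 t : G)
    (h1 : a1 * a3 = a3 * a1) (h2 : a4 * a3 = a3 * a4)
    (h3a : b * a1 = a1 * b) (h3b : b * a2 = a2 * b) (h3c : b * a3 = a3 * b)
    (h4a : a1 * a2 * a1 = a2 * a1 * a2) (h4b : a3 * a2 * a3 = a2 * a3 * a2)
    (h4c : a4 * a2 * a4 = a2 * a4 * a2)
    (h5 : (a1 * a2 * a3) ^ 4 = 1) (h6 : (a4 * a2 * a3) ^ 4 = 1)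
    (h7 : u3 * a1 * u3⁻¹ = a1) (h8 : u3 * a3 * u3⁻¹ = a3⁻¹)
    (h9 : u3 * a2 * u3⁻¹ = a2 * a4⁻¹ * a2⁻¹)
    (h10 : (u3 * a4) ^ 2 = 1) (h11 : (u3 * b) ^ 2 = 1)
    (h12 : u3 * a4 * u3⁻¹ = u1 * a4 * u1⁻¹)
    (h13 : u1 * u3 = u3 * u1) (h14 : u1 ^ 2 = u3 ^ 2)
    (h15 : u1 = (a1 * a2 * a3) ^ 2 * u3 * (a1 * a2 * a3) ^ 2)
    (h16 : u2 = a3⁻¹ * a2⁻¹ * u3⁻¹ * a2 * a3)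
    (h17 : t = u3 * u2 * u1 * a1 * a2 * a3)
    (h18 : t ^ 2 = 1) (h19 : t * u3 * t = u3⁻¹) (h20 : t * b * t = b⁻¹)
    (h21a : t * a1 = a1 * t) (h21b : t * a2 = a2 * t) (h21c : t * a3 = a3 * t) :
    t * a1⁻¹ * u1⁻¹ = a3⁻¹ * (a3 ^ 2 * a2) ^ 2 * a4 ∧ (a3 ^ 2 * a2) ^ 2 = a3 * t * a1⁻¹ * u1⁻¹ * a4⁻¹ := by
  obtain ⟨c, hc⟩ : ∃ y : G, y = a1 * a2 * a3 := ⟨_, rfl⟩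
  obtain ⟨X, hX⟩ : ∃ y : G, y = a3 * a2 * a4 * a3 := ⟨_, rfl⟩
  obtain ⟨g, hg⟩ : ∃ y : G, y = X⁻¹ * (a1 * X) := ⟨_, rfl⟩
  -- commuting helpers
  have c13 : Commute a1 a3 := h1
  have e31i : a3 * a1⁻¹ = a1⁻¹ * a3 := (c13.symm.inv_right).eq
  have h1ii : a3⁻¹ * a1⁻¹ = a1⁻¹ * a3⁻¹ := ((c13.inv_left).inv_right).eq.symm
  -- u3 move rules
  have h7' : u3 * a1 = a1 * u3 := mul_inv_eq_iff_eq_mul.mp h7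
  have h8' : u3 * a3 = a3⁻¹ * u3 := mul_inv_eq_iff_eq_mul.mp h8
  have h8inv : u3 * a3⁻¹ = a3 * u3 := by
    refine mul_inv_eq_iff_eq_mul.mpr ?_
    rw [mul_assoc, h8', mul_inv_cancel_left]
  have e9i : u3 * a2⁻¹ * u3⁻¹ = a2 * a4 * a2⁻¹ := by
    rw [show u3 * a2⁻¹ * u3⁻¹ = (u3 * a2 * u3⁻¹)⁻¹ from by group, h9]; group
  have h9inv : u3 * a2⁻¹ = a2 * a4 * a2⁻¹ * u3 := mul_inv_eq_iff_eq_mul.mp e9i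
  -- c braid rules
  have Fc1 : c * a1 = a2 * c := by
    rw [hc]
    calc a1 * a2 * a3 * a1 = a1 * a2 * (a3 * a1) := by group
      _ = a1 * a2 * (a1 * a3) := by rw [← h1]
      _ = a1 * a2 * a1 * a3 := by group
      _ = a2 * a1 * a2 * a3 := by rw [h4a]
      _ = a2 * (a1 * a2 * a3) := by group
  have Fc2 : c * a2 = a3 * c := by
    rw [hc]
    calc a1 * a2 * a3 * a2 = a1 * (a2 * a3 * a2) := by group
      _ = a1 * (a3 * a2 * a3) := by rw [← h4b]
      _ = a1 * a3 * (a2 * a3) := by group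
      _ = a3 * a1 * (a2 * a3) := by rw [h1]
      _ = a3 * (a1 * a2 * a3) := by group
  have Fcc : c * c * (c * c) = 1 := by
    rw [hc, ← h5]; simp only [pow_succ, pow_zero, one_mul]; group
  have F3a : c * c * a1 = a3 * (c * c) := by
    calc c * c * a1 = c * (c * a1) := by group
      _ = c * (a2 * c) := by rw [Fc1]
      _ = c * a2 * c := by group
      _ = a3 * c * c := by rw [Fc2]
      _ = a3 * (c * c) := by group
  have F3b : c * c * a3 = a1 * (c * c) := by
    have F3b' : a1 * (c * c) = c * c * a3 := by
      calc a1 * (c * c) = c * c * (c * c) * (a1 * (c * c)) := by rw [Fcc, one_mul]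
        _ = c * c * (c * c * a1) * (c * c) := by group
        _ = c * c * (a3 * (c * c)) * (c * c) := by rw [F3a]
        _ = c * c * a3 * (c * c * (c * c)) := by group
        _ = c * c * a3 * 1 := by rw [Fcc]
        _ = c * c * a3 := by rw [mul_one]
    exact F3b'.symm
  have F3binv : c * c * a3⁻¹ = a1⁻¹ * (c * c) := by
    calc c * c * a3⁻¹ = a1⁻¹ * (a1 * (c * c) * a3⁻¹) := by group
      _ = a1⁻¹ * (c * c * a3 * a3⁻¹) := by rw [← F3b]
      _ = a1⁻¹ * (c * c) := by group
  -- u1 expression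
  have hu1 : u1 = c * c * u3 * (c * c) := by rw [hc, h15]; simp only [pow_two, mul_assoc]
  have F5 : u1 * a1 = a1⁻¹ * u1 := by
    calc u1 * a1 = c * c * u3 * (c * c) * a1 := by rw [hu1]
      _ = c * c * u3 * (c * c * a1) := by group
      _ = c * c * u3 * (a3 * (c * c)) := by rw [F3a]
      _ = c * c * (u3 * a3) * (c * c) := by group
      _ = c * c * (a3⁻¹ * u3) * (c * c) := by rw [h8']
      _ = c * c * a3⁻¹ * (u3 * (c * c)) := by group
      _ = a1⁻¹ * (c * c) * (u3 * (c * c)) := by rw [F3binv]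
      _ = a1⁻¹ * u1 := by rw [hu1]; group
  have F6 : u1 * a3 = a3 * u1 := by
    calc u1 * a3 = c * c * u3 * (c * c) * a3 := by rw [hu1]
      _ = c * c * u3 * (c * c * a3) := by group
      _ = c * c * u3 * (a1 * (c * c)) := by rw [F3b]
      _ = c * c * (u3 * a1) * (c * c) := by group
      _ = c * c * (a1 * u3) * (c * c) := by rw [h7']
      _ = c * c * a1 * (u3 * (c * c)) := by group
      _ = a3 * (c * c) * (u3 * (c * c)) := by rw [F3a]
      _ = a3 * u1 := by rw [hu1]; group
  have F6c : Commute u1 a3 := F6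
  have F6il : u1⁻¹ * a3 = a3 * u1⁻¹ := (F6c.inv_left).eq
  have F5inv : u1 * a1⁻¹ = a1 * u1 := by
    calc u1 * a1⁻¹ = a1 * ((a1⁻¹ * u1) * a1⁻¹) := by group
      _ = a1 * ((u1 * a1) * a1⁻¹) := by rw [← F5]
      _ = a1 * u1 := by group
  -- u3 * u2 = X and t = X * (u1 * c)
  have F7 : u3 * u2 = a3 * a2 * a4 * a3 := by
    calc u3 * u2 = u3 * (a3⁻¹ * a2⁻¹ * u3⁻¹ * a2 * a3) := by rw [h16]
      _ = u3 * a3⁻¹ * (a2⁻¹ * (u3⁻¹ * (a2 * a3))) := by group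
      _ = a3 * u3 * (a2⁻¹ * (u3⁻¹ * (a2 * a3))) := by rw [h8inv]
      _ = a3 * (u3 * a2⁻¹) * (u3⁻¹ * (a2 * a3)) := by group
      _ = a3 * (a2 * a4 * a2⁻¹ * u3) * (u3⁻¹ * (a2 * a3)) := by rw [h9inv]
      _ = a3 * a2 * a4 * a3 := by group
  have F7X : u3 * u2 = X := by rw [hX]; exact F7
  have F8 : t = X * (u1 * c) := by
    calc t = u3 * u2 * u1 * a1 * a2 * a3 := h17
      _ = u3 * u2 * (u1 * (a1 * a2 * a3)) := by group
      _ = u3 * u2 * (u1 * c) := by rw [← hc]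
      _ = X * (u1 * c) := by rw [F7X]
  -- u1 * a2 = g * u1
  have F9 : u1 * a2 = g * u1 := by
    have e : X * (u1 * c) * a1 = a1 * (X * (u1 * c)) := by rw [← F8]; exact h21a
    have e2 : X * (u1 * (a2 * c)) = a1 * (X * (u1 * c)) := by
      calc X * (u1 * (a2 * c)) = X * (u1 * (c * a1)) := by rw [← Fc1]
        _ = X * (u1 * c) * a1 := by group
        _ = a1 * (X * (u1 * c)) := e
    have e3 : u1 * a2 = X⁻¹ * (a1 * (X * (u1 * c))) * c⁻¹ := by
      rw [← e2]; group
    calc u1 * a2 = X⁻¹ * (a1 * (X * (u1 * c))) * c⁻¹ := e3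
      _ = X⁻¹ * (a1 * X) * u1 := by group
      _ = g * u1 := by rw [← hg]
  -- u1 * a4 = a4⁻¹ * u1⁻¹
  have e10 : u3 * a4 * (u3 * a4) = 1 := by rw [← h10, pow_two]
  have e10' : u3 * a4 = a4⁻¹ * u3⁻¹ := by
    calc u3 * a4 = (u3 * a4) * (u3 * a4) * (a4⁻¹ * u3⁻¹) := by group
      _ = 1 * (a4⁻¹ * u3⁻¹) := by rw [e10]
      _ = a4⁻¹ * u3⁻¹ := one_mul _
  have e14 : u1 * u1 = u3 * u3 := by rw [← pow_two, ← pow_two]; exact h14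
  have h12' : u1 * a4 = u3 * a4 * u3⁻¹ * u1 := mul_inv_eq_iff_eq_mul.mp h12.symm
  have F10 : u1 * a4 = a4⁻¹ * u1⁻¹ := by
    calc u1 * a4 = u3 * a4 * u3⁻¹ * u1 := h12'
      _ = a4⁻¹ * u3⁻¹ * u3⁻¹ * u1 := by rw [e10']
      _ = a4⁻¹ * (u3 * u3)⁻¹ * u1 := by group
      _ = a4⁻¹ * (u1 * u1)⁻¹ * u1 := by rw [← e14]
      _ = a4⁻¹ * u1⁻¹ := by group
  -- key: u1 * X = a3 * g * a4⁻¹ * a3 * u1⁻¹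
  have F11a : u1 * X = a3 * g * a4⁻¹ * a3 * u1⁻¹ := by
    calc u1 * X = u1 * (a3 * a2 * a4 * a3) := by rw [hX]
      _ = (u1 * a3) * (a2 * (a4 * a3)) := by group
      _ = (a3 * u1) * (a2 * (a4 * a3)) := by rw [F6]
      _ = a3 * ((u1 * a2) * (a4 * a3)) := by group
      _ = a3 * ((g * u1) * (a4 * a3)) := by rw [F9]
      _ = a3 * (g * ((u1 * a4) * a3)) := by group
      _ = a3 * (g * ((a4⁻¹ * u1⁻¹) * a3)) := by rw [F10]
      _ = a3 * (g * (a4⁻¹ * (u1⁻¹ * a3))) := by group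
      _ = a3 * (g * (a4⁻¹ * (a3 * u1⁻¹))) := by rw [F6il]
      _ = a3 * g * a4⁻¹ * a3 * u1⁻¹ := by group
  have Xe : X = u1⁻¹ * (a3 * g * a4⁻¹ * a3 * u1⁻¹) := by rw [← F11a]; group
  have Xie : X⁻¹ = u1 * (a3⁻¹ * a4 * g⁻¹ * a3⁻¹) * u1 := by rw [Xe]; group
  have F9' : a2 = u1⁻¹ * (g * u1) := by rw [← F9]; group
  -- the central relation
  have F11raw : a2 = a3⁻¹ * (a4 * (g⁻¹ * (a1⁻¹ * (g * (a4⁻¹ * a3))))) := by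
    calc a2 = u1⁻¹ * (g * u1) := F9'
      _ = u1⁻¹ * (X⁻¹ * (a1 * X) * u1) := by rw [hg]
      _ = u1⁻¹ * (u1 * (a3⁻¹ * a4 * g⁻¹ * a3⁻¹) * u1 *
            (a1 * (u1⁻¹ * (a3 * g * a4⁻¹ * a3 * u1⁻¹))) * u1) := by rw [Xie, Xe]
      _ = a3⁻¹ * a4 * g⁻¹ * a3⁻¹ * (u1 * a1) * (u1⁻¹ * (a3 * g * a4⁻¹ * a3)) := by group
      _ = a3⁻¹ * a4 * g⁻¹ * a3⁻¹ * (a1⁻¹ * u1) * (u1⁻¹ * (a3 * g * a4⁻¹ * a3)) := by rw [F5]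
      _ = a3⁻¹ * a4 * g⁻¹ * (a3⁻¹ * a1⁻¹) * (a3 * g * a4⁻¹ * a3) := by group
      _ = a3⁻¹ * a4 * g⁻¹ * (a1⁻¹ * a3⁻¹) * (a3 * g * a4⁻¹ * a3) := by rw [h1ii]
      _ = a3⁻¹ * (a4 * (g⁻¹ * (a1⁻¹ * (g * (a4⁻¹ * a3))))) := by group
  have F11 : g⁻¹ * (a1⁻¹ * g) = a4⁻¹ * (a3 * (a2 * (a3⁻¹ * a4))) := by
    calc g⁻¹ * (a1⁻¹ * g)
        = a4⁻¹ * (a3 * ((a3⁻¹ * (a4 * (g⁻¹ * (a1⁻¹ * (g * (a4⁻¹ * a3)))))) * (a3⁻¹ * a4))) := by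
          group
      _ = a4⁻¹ * (a3 * (a2 * (a3⁻¹ * a4))) := by rw [← F11raw]
  -- braid between a1⁻¹ and g
  have e1 : u1 * (a1 * (a2 * a1)) = a1⁻¹ * (g * (a1⁻¹ * u1)) := by
    calc u1 * (a1 * (a2 * a1)) = (u1 * a1) * (a2 * a1) := by group
      _ = (a1⁻¹ * u1) * (a2 * a1) := by rw [F5]
      _ = a1⁻¹ * ((u1 * a2) * a1) := by group
      _ = a1⁻¹ * ((g * u1) * a1) := by rw [F9]
      _ = a1⁻¹ * (g * (u1 * a1)) := by group
      _ = a1⁻¹ * (g * (a1⁻¹ * u1)) := by rw [F5]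
  have e2 : u1 * (a2 * (a1 * a2)) = g * (a1⁻¹ * (g * u1)) := by
    calc u1 * (a2 * (a1 * a2)) = (u1 * a2) * (a1 * a2) := by group
      _ = (g * u1) * (a1 * a2) := by rw [F9]
      _ = g * ((u1 * a1) * a2) := by group
      _ = g * ((a1⁻¹ * u1) * a2) := by rw [F5]
      _ = g * (a1⁻¹ * (u1 * a2)) := by group
      _ = g * (a1⁻¹ * (g * u1)) := by rw [F9]
  have e3 : a1 * (a2 * a1) = a2 * (a1 * a2) := by
    rw [show a1 * (a2 * a1) = a1 * a2 * a1 from by group, h4a]; group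
  have F12' : a1⁻¹ * (g * (a1⁻¹ * u1)) = g * (a1⁻¹ * (g * u1)) := by
    rw [← e1, ← e2, e3]
  have F12e : a1⁻¹ * (g * a1⁻¹) = g * (a1⁻¹ * g) := by
    calc a1⁻¹ * (g * a1⁻¹) = a1⁻¹ * (g * (a1⁻¹ * u1)) * u1⁻¹ := by group
      _ = g * (a1⁻¹ * (g * u1)) * u1⁻¹ := by rw [F12']
      _ = g * (a1⁻¹ * g) := by group
  have F13 : g⁻¹ * (a1⁻¹ * g) = a1⁻¹ * (g * a1) := by
    calc g⁻¹ * (a1⁻¹ * g) = g⁻¹ * ((a1⁻¹ * (g * a1⁻¹)) * a1) := by group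
      _ = g⁻¹ * ((g * (a1⁻¹ * g)) * a1) := by rw [F12e]
      _ = a1⁻¹ * (g * a1) := by group
  -- assemble
  have ec : c * a1⁻¹ = a1 * (a2 * (a1⁻¹ * a3)) := by
    rw [hc]
    calc a1 * a2 * a3 * a1⁻¹ = a1 * (a2 * (a3 * a1⁻¹)) := by group
      _ = a1 * (a2 * (a1⁻¹ * a3)) := by rw [e31i]
  have G1 : t * a1⁻¹ * u1⁻¹ = a3⁻¹ * (a3 ^ 2 * a2) ^ 2 * a4 := by
    calc t * a1⁻¹ * u1⁻¹ = X * (u1 * c) * a1⁻¹ * u1⁻¹ := by rw [F8]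
      _ = X * (u1 * (c * a1⁻¹)) * u1⁻¹ := by group
      _ = X * (u1 * (a1 * (a2 * (a1⁻¹ * a3)))) * u1⁻¹ := by rw [ec]
      _ = X * ((u1 * a1) * (a2 * (a1⁻¹ * a3))) * u1⁻¹ := by group
      _ = X * ((a1⁻¹ * u1) * (a2 * (a1⁻¹ * a3))) * u1⁻¹ := by rw [F5]
      _ = X * (a1⁻¹ * ((u1 * a2) * (a1⁻¹ * a3))) * u1⁻¹ := by group
      _ = X * (a1⁻¹ * ((g * u1) * (a1⁻¹ * a3))) * u1⁻¹ := by rw [F9]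
      _ = X * (a1⁻¹ * (g * ((u1 * a1⁻¹) * a3))) * u1⁻¹ := by group
      _ = X * (a1⁻¹ * (g * ((a1 * u1) * a3))) * u1⁻¹ := by rw [F5inv]
      _ = X * (a1⁻¹ * (g * (a1 * (u1 * a3)))) * u1⁻¹ := by group
      _ = X * (a1⁻¹ * (g * (a1 * (a3 * u1)))) * u1⁻¹ := by rw [F6]
      _ = X * ((a1⁻¹ * (g * a1)) * a3) := by group
      _ = X * ((g⁻¹ * (a1⁻¹ * g)) * a3) := by rw [← F13]
      _ = X * ((a4⁻¹ * (a3 * (a2 * (a3⁻¹ * a4)))) * a3) := by rw [F11]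
      _ = a3 * a2 * (a4 * a3) * (a4⁻¹ * (a3 * (a2 * (a3⁻¹ * (a4 * a3))))) := by rw [hX]; group
      _ = a3 * a2 * (a3 * a4) * (a4⁻¹ * (a3 * (a2 * (a3⁻¹ * (a3 * a4))))) := by rw [h2]
      _ = a3⁻¹ * (a3 ^ 2 * a2) ^ 2 * a4 := by simp only [pow_two]; group
  refine ⟨G1, ?_⟩
  calc (a3 ^ 2 * a2) ^ 2 = a3 * (a3⁻¹ * (a3 ^ 2 * a2) ^ 2 * a4) * a4⁻¹ := by simp only [pow_two]; group
    _ = a3 * (t * a1⁻¹ * u1⁻¹) * a4⁻¹ := by rw [← G1]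
    _ = a3 * t * a1⁻¹ * u1⁻¹ * a4⁻¹ := by group
end

section
/- Let G be a group with elements a1, a2, a3, a4, b, u1, u2, u3, t satisfying relations (1)–(21) below. Then t*a4*t = u1⁻¹*a4⁻¹*u1. -/
theorem stmt19 {G : Type*} [Group G] (a1 a2 a3 a4 b u1 u2 u3 t : G)
    (h1 : a1 * a3 = a3 * a1) (h2 : a4 * a3 = a3 * a4)
    (h3a : b * a1 = a1 * b) (h3b : b * a2 = a2 * b) (h3c : b * a3 = a3 * b)
    (h4a : a1 * a2 * a1 = a2 * a1 * a2) (h4b : a3 * a2 * a3 = a2 * a3 * a2)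
    (h4c : a4 * a2 * a4 = a2 * a4 * a2)
    (h5 : (a1 * a2 * a3) ^ 4 = 1) (h6 : (a4 * a2 * a3) ^ 4 = 1)
    (h7 : u3 * a1 * u3⁻¹ = a1) (h8 : u3 * a3 * u3⁻¹ = a3⁻¹)
    (h9 : u3 * a2 * u3⁻¹ = a2 * a4⁻¹ * a2⁻¹)
    (h10 : (u3 * a4) ^ 2 = 1) (h11 : (u3 * b) ^ 2 = 1)
    (h12 : u3 * a4 * u3⁻¹ = u1 * a4 * u1⁻¹)
    (h13 : u1 * u3 = u3 * u1) (h14 : u1 ^ 2 = u3 ^ 2)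
    (h15 : u1 = (a1 * a2 * a3) ^ 2 * u3 * (a1 * a2 * a3) ^ 2)
    (h16 : u2 = a3⁻¹ * a2⁻¹ * u3⁻¹ * a2 * a3)
    (h17 : t = u3 * u2 * u1 * a1 * a2 * a3)
    (h18 : t ^ 2 = 1) (h19 : t * u3 * t = u3⁻¹) (h20 : t * b * t = b⁻¹)
    (h21a : t * a1 = a1 * t) (h21b : t * a2 = a2 * t) (h21c : t * a3 = a3 * t) :
    t * a4 * t = u1⁻¹ * a4⁻¹ * u1 := by
  -- basic facts about t
  have ht : t * t = 1 := by rw [← pow_two]; exact h18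
  have hti : t⁻¹ = t := inv_eq_of_mul_eq_one_right ht
  -- from h10 : u3 * a4 * u3 = a4⁻¹
  have hA : u3 * a4 * u3 = a4⁻¹ := by
    have h := h10
    rw [pow_two] at h
    calc u3 * a4 * u3 = (u3 * a4 * (u3 * a4)) * a4⁻¹ := by group
      _ = a4⁻¹ := by rw [h, one_mul]
  -- u1 * a4 * u1 = a4⁻¹
  have hu1a4 : u1 * a4 * u1 = a4⁻¹ := by
    calc u1 * a4 * u1 = (u1 * a4 * u1⁻¹) * u1 ^ 2 := by group
      _ = (u3 * a4 * u3⁻¹) * u3 ^ 2 := by rw [h12, h14]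
      _ = u3 * a4 * u3 := by group
      _ = a4⁻¹ := hA
  -- a4 in terms of a2, u3
  have e9 : a4 = a2⁻¹ * u3 * a2⁻¹ * u3⁻¹ * a2 := by
    calc a4 = a2⁻¹ * (a2 * a4⁻¹ * a2⁻¹)⁻¹ * a2 := by group
      _ = a2⁻¹ * (u3 * a2 * u3⁻¹)⁻¹ * a2 := by rw [h9]
      _ = a2⁻¹ * u3 * a2⁻¹ * u3⁻¹ * a2 := by group
  -- commutation of t with a2, a2⁻¹, u3, u3⁻¹
  have hta2' : t * a2⁻¹ = a2⁻¹ * t := by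
    calc t * a2⁻¹ = a2⁻¹ * ((a2 * t) * a2⁻¹) := by group
      _ = a2⁻¹ * ((t * a2) * a2⁻¹) := by rw [h21b]
      _ = a2⁻¹ * t := by group
  have htu3 : t * u3 = u3⁻¹ * t := by
    calc t * u3 = (t * u3 * t) * t⁻¹ := by group
      _ = u3⁻¹ * t⁻¹ := by rw [h19]
      _ = u3⁻¹ * t := by rw [hti]
  have h19' : t * u3⁻¹ * t = u3 := by
    calc t * u3⁻¹ * t = t⁻¹ * u3⁻¹ * t⁻¹ := by rw [hti]
      _ = (t * u3 * t)⁻¹ := by group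
      _ = u3⁻¹⁻¹ := by rw [h19]
      _ = u3 := inv_inv u3
  have htu3' : t * u3⁻¹ = u3 * t := by
    calc t * u3⁻¹ = (t * u3⁻¹ * t) * t⁻¹ := by group
      _ = u3 * t⁻¹ := by rw [h19']
      _ = u3 * t := by rw [hti]
  -- movers for pushing t to the right
  have m2 : ∀ x : G, t * (a2 * x) = a2 * (t * x) := fun x => by
    rw [← mul_assoc, h21b, mul_assoc]
  have m2' : ∀ x : G, t * (a2⁻¹ * x) = a2⁻¹ * (t * x) := fun x => by
    rw [← mul_assoc, hta2', mul_assoc]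
  have m3 : ∀ x : G, t * (u3 * x) = u3⁻¹ * (t * x) := fun x => by
    rw [← mul_assoc, htu3, mul_assoc]
  have m3' : ∀ x : G, t * (u3⁻¹ * x) = u3 * (t * x) := fun x => by
    rw [← mul_assoc, htu3', mul_assoc]
  -- conjugating the word for a4 by t
  have step : t * (a2⁻¹ * u3 * a2⁻¹ * u3⁻¹ * a2) * t
      = a2⁻¹ * u3⁻¹ * a2⁻¹ * u3 * a2 := by
    simp only [mul_assoc, m2, m2', m3, m3', ht, mul_one]
  -- movers for pushing u3 to the right
  have hu3a2 : u3 * a2 = a2 * a4⁻¹ * a2⁻¹ * u3 := by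
    calc u3 * a2 = (u3 * a2 * u3⁻¹) * u3 := by group
      _ = a2 * a4⁻¹ * a2⁻¹ * u3 := by rw [h9]
  have hu3a2' : u3 * a2⁻¹ = a2 * a4 * a2⁻¹ * u3 := by
    calc u3 * a2⁻¹ = (u3 * a2 * u3⁻¹)⁻¹ * u3 := by group
      _ = (a2 * a4⁻¹ * a2⁻¹)⁻¹ * u3 := by rw [h9]
      _ = a2 * a4 * a2⁻¹ * u3 := by group
  have n2 : ∀ x : G, u3 * (a2 * x) = a2 * (a4⁻¹ * (a2⁻¹ * (u3 * x))) := fun x => by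
    rw [← mul_assoc, hu3a2]; group
  have n2' : ∀ x : G, u3 * (a2⁻¹ * x) = a2 * (a4 * (a2⁻¹ * (u3 * x))) := fun x => by
    rw [← mul_assoc, hu3a2']; group
  have hu3a4 : u3⁻¹ * a4⁻¹ = a4 * u3 := by
    rw [← hA]; group
  have n4' : ∀ x : G, u3⁻¹ * (a4⁻¹ * x) = a4 * (u3 * x) := fun x => by
    rw [← mul_assoc, hu3a4, mul_assoc]
  -- braid relation consequence
  have hb : a2⁻¹ * a4 * a2 = a4 * a2 * a4⁻¹ := by
    calc a2⁻¹ * a4 * a2 = a2⁻¹ * (a4 * a2 * a4) * a4⁻¹ := by group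
      _ = a2⁻¹ * (a2 * a4 * a2) * a4⁻¹ := by rw [h4c]
      _ = a4 * a2 * a4⁻¹ := by group
  have nb : ∀ x : G, a2⁻¹ * (a4 * (a2 * x)) = a4 * (a2 * (a4⁻¹ * x)) := fun x => by
    calc a2⁻¹ * (a4 * (a2 * x)) = (a2⁻¹ * a4 * a2) * x := by group
      _ = (a4 * a2 * a4⁻¹) * x := by rw [hb]
      _ = a4 * (a2 * (a4⁻¹ * x)) := by group
  -- key conjugation identity
  have key : u3 * (a2 * (u3⁻¹ * (u3⁻¹ * (a4⁻¹ * a2⁻¹)))) * u3⁻¹ = a2 := by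
    simp only [mul_assoc, n2, n2', n4', nb, mul_inv_cancel_left, inv_mul_cancel_left,
      mul_inv_cancel, inv_mul_cancel, mul_one, one_mul]
  have hk : u3⁻¹ * a2 * u3 = a2 * (u3⁻¹ * (u3⁻¹ * (a4⁻¹ * a2⁻¹))) := by
    calc u3⁻¹ * a2 * u3
        = u3⁻¹ * (u3 * (a2 * (u3⁻¹ * (u3⁻¹ * (a4⁻¹ * a2⁻¹)))) * u3⁻¹) * u3 := by
          rw [key]
      _ = a2 * (u3⁻¹ * (u3⁻¹ * (a4⁻¹ * a2⁻¹))) := by group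
  have K : a2⁻¹ * u3⁻¹ * a2⁻¹ * u3 * a2 = a4 * u3 ^ 2 := by
    calc a2⁻¹ * u3⁻¹ * a2⁻¹ * u3 * a2 = a2⁻¹ * (u3⁻¹ * a2 * u3)⁻¹ * a2 := by group
      _ = a2⁻¹ * (a2 * (u3⁻¹ * (u3⁻¹ * (a4⁻¹ * a2⁻¹))))⁻¹ * a2 := by rw [hk]
      _ = a4 * u3 ^ 2 := by group
  calc t * a4 * t = t * (a2⁻¹ * u3 * a2⁻¹ * u3⁻¹ * a2) * t := by rw [← e9]
    _ = a2⁻¹ * u3⁻¹ * a2⁻¹ * u3 * a2 := step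
    _ = a4 * u3 ^ 2 := K
    _ = a4 * u1 ^ 2 := by rw [h14]
    _ = u1⁻¹ * (u1 * a4 * u1) * u1 := by rw [pow_two]; group
    _ = u1⁻¹ * a4⁻¹ * u1 := by rw [hu1a4]
end
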